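/- Let Q₁^SR(x;q) = 1 − ((1+x)/((1+q)·η_r))^{1/q} for 0 ≤ x < η_r with η_r ≥ 1/q and q > 0. Then Q₁^SR(x;q) equals the probability that one post-change SR update starting from R_ν = x stays below η_r, i.e., P{((1+x)/(1+q))·exp(q·Y/(1+q)) < η_r} with Y ~ Exp(mean 1+q). -/

import Mathlib

open MeasureTheory Real

/-- Strict-inequality CDF for a random variable with continuous exponential-type CDF. -/
lemma aux_lt_cdf {Ω : Type*} [MeasurableSpace Ω] (μ : Measure Ω)
    (Y : Ω → ℝ) (a : ℝ) (ha : 0 < a)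
    (hY : ∀ t : ℝ, μ {ω | Y ω ≤ t} = ENNReal.ofReal (1 - Real.exp (-(t / a)))) (t : ℝ) :
    μ {ω | Y ω < t} = ENNReal.ofReal (1 - Real.exp (-(t / a))) := by
  have hsm : Monotone fun n : ℕ => {ω | Y ω ≤ t - 1 / (n + 1)} := by
    intro m n hmn ω hω
    simp only [Set.mem_setOf_eq] at hω ⊢
    have h1 : (1:ℝ) / (n + 1) ≤ 1 / (m + 1) := by
      apply one_div_le_one_div_of_le (by positivity)
      have : (m:ℝ) ≤ n := Nat.cast_le.2 hmn
      linarith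
    linarith
  have hset : {ω | Y ω < t} = ⋃ n : ℕ, {ω | Y ω ≤ t - 1 / (n + 1)} := by
    ext ω
    simp only [Set.mem_setOf_eq, Set.mem_iUnion]
    constructor
    · intro h
      obtain ⟨n, hn⟩ := exists_nat_one_div_lt (sub_pos.2 h)
      exact ⟨n, by push_cast at hn ⊢; linarith⟩
    · rintro ⟨n, hn⟩
      have : (0:ℝ) < 1 / (n + 1) := by positivity
      linarith
  rw [hset, hsm.measure_iUnion]
  have hmono : Monotone fun n : ℕ => μ {ω | Y ω ≤ t - 1 / (n + 1)} :=
    fun m n hmn => measure_mono (hsm hmn)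
  have key : Filter.Tendsto (fun n : ℕ => μ {ω | Y ω ≤ t - 1 / (n + 1)}) Filter.atTop
      (nhds (ENNReal.ofReal (1 - Real.exp (-(t / a))))) := by
    simp only [hY]
    have h1 : Filter.Tendsto (fun n : ℕ => t - 1 / ((n:ℝ) + 1)) Filter.atTop (nhds t) := by
      have := tendsto_one_div_add_atTop_nhds_zero_nat (𝕜 := ℝ)
      have := (tendsto_const_nhds (x := t)).sub this
      simpa using this
    have h2 : Filter.Tendsto (fun n : ℕ => 1 - Real.exp (-((t - 1 / ((n:ℝ) + 1)) / a)))
        Filter.atTop (nhds (1 - Real.exp (-(t / a)))) := by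
      apply Filter.Tendsto.const_sub
      exact (Real.continuous_exp.tendsto _).comp ((h1.div_const a).neg)
    exact (ENNReal.continuous_ofReal.tendsto _).comp h2
  exact tendsto_nhds_unique (tendsto_atTop_iSup hmono) key

/-- One-step conditional covert probability under the SR test: with `Y` exponential of mean
`1+q`, `q > 0`, `η_r ≥ 1/q`, and `0 ≤ x < η_r`, the probability that one post-change SR
update starting from `R_ν = x` stays below `η_r` equals
`Q₁^SR(x;q) = 1 − ((1+x)/((1+q)·η_r))^{1/q}`. -/
theorem stmt16 {Ω : Type*} [MeasurableSpace Ω] (μ : Measure Ω) [IsProbabilityMeasure μ]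
    (Y : Ω → ℝ) (q ηr x : ℝ) (hq : 0 < q) (hηr : 1 / q ≤ ηr) (hx : 0 ≤ x) (hxηr : x < ηr)
    (hY : ∀ t : ℝ, μ {ω | Y ω ≤ t} = ENNReal.ofReal (1 - Real.exp (-(t / (1 + q))))) :
    μ {ω | ((1 + x) / (1 + q)) * Real.exp (q * Y ω / (1 + q)) < ηr}
      = ENNReal.ofReal (1 - ((1 + x) / ((1 + q) * ηr)) ^ (1 / q)) := by
  have hq1 : (0:ℝ) < 1 + q := by linarith
  have hx1 : (0:ℝ) < 1 + x := by linarith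
  have hηr0 : (0:ℝ) < ηr := lt_of_lt_of_le (by positivity) hηr
  set A : ℝ := ηr * (1 + q) / (1 + x) with hA
  have hA0 : 0 < A := by positivity
  set t : ℝ := (1 + q) / q * Real.log A with ht
  have hset : {ω | ((1 + x) / (1 + q)) * Real.exp (q * Y ω / (1 + q)) < ηr}
      = {ω | Y ω < t} := by
    ext ω
    simp only [Set.mem_setOf_eq]
    rw [div_mul_eq_mul_div, div_lt_iff₀ hq1, ← lt_div_iff₀' hx1]
    have : ηr * (1 + q) / (1 + x) = A := rfl
    rw [this, ← Real.lt_log_iff_exp_lt hA0, ht]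
    rw [div_lt_iff₀ hq1, div_mul_eq_mul_div, lt_div_iff₀ hq]
    constructor <;> intro h <;> nlinarith [h]
  rw [hset, aux_lt_cdf μ Y (1 + q) hq1 hY t]
  congr 1
  have : t / (1 + q) = Real.log A / q := by
    field_simp [ht]
    rw [ht, div_mul_eq_mul_div, div_mul_cancel₀ _ hq.ne']
  rw [this]
  have hexp : Real.exp (-(Real.log A / q)) = ((1 + x) / ((1 + q) * ηr)) ^ (1 / q) := by
    have hb : (0:ℝ) < (1 + x) / ((1 + q) * ηr) := by positivity
    have hlogA : Real.log A = Real.log ηr + Real.log (1 + q) - Real.log (1 + x) := by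
      rw [hA, Real.log_div (by positivity) (by positivity),
        Real.log_mul (by positivity) (by positivity)]
    have hlogb : Real.log ((1 + x) / ((1 + q) * ηr))
        = Real.log (1 + x) - (Real.log (1 + q) + Real.log ηr) := by
      rw [Real.log_div (by positivity) (by positivity),
        Real.log_mul (by positivity) (by positivity)]
    rw [Real.rpow_def_of_pos hb]
    congr 1
    rw [hlogA, hlogb]
    field_simp
    ring
  rw [hexp]
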